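/- Let T = (c₁,…,c₆,f₁,f₂,f₃,f₄,t₁,t₂) and T′ = (c₁,…,c₆,f₁′,f₂′,f₃′,f₄′,t₁′,t₂′) be tuples in ℤ¹² with the same c-coordinates, and suppose c₁, c₂, c₃ are pairwise relatively prime (gcd(c₁,c₂) = gcd(c₂,c₃) = gcd(c₁,c₃) = 1). Then T and T′ are ψ-equivalent if and only if c₁c₂f₃ + c₁c₃f₂ + c₂c₃f₁ + c₂c₅f₄ ≡ c₁c₂f₃′ + c₁c₃f₂′ + c₂c₃f₁′ + c₂c₅f₄′ (mod gcd(c₁c₄−c₂c₅, c₁c₄−c₃c₆)), where the congruence modulo 0 means equality. -/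

import Mathlib

/-- A 12-tuple of integers, with coordinates written `(c₁,…,c₆,f₁,…,f₄,t₁,t₂)`. -/
structure Tuple : Type where
  c1 : ℤ
  c2 : ℤ
  c3 : ℤ
  c4 : ℤ
  c5 : ℤ
  c6 : ℤ
  f1 : ℤ
  f2 : ℤ
  f3 : ℤ
  f4 : ℤ
  t1 : ℤ
  t2 : ℤ

/-- The move ψ₂₁ : f₃↦f₃+c₅, f₄↦f₄−c₁, t₁↦t₁+f₁. -/
def psi21 : Equiv.Perm Tuple where
  toFun x := { x with f3 := x.f3 + x.c5, f4 := x.f4 - x.c1, t1 := x.t1 + x.f1 }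
  invFun x := { x with f3 := x.f3 - x.c5, f4 := x.f4 + x.c1, t1 := x.t1 - x.f1 }
  left_inv x := by cases x; simp
  right_inv x := by cases x; simp

/-- The move ψ₄₁ : f₂↦f₂+c₆, f₃↦f₃−c₅, t₂↦t₂−f₁. -/
def psi41 : Equiv.Perm Tuple where
  toFun x := { x with f2 := x.f2 + x.c6, f3 := x.f3 - x.c5, t2 := x.t2 - x.f1 }
  invFun x := { x with f2 := x.f2 - x.c6, f3 := x.f3 + x.c5, t2 := x.t2 + x.f1 }
  left_inv x := by cases x; simp
  right_inv x := by cases x; simp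

/-- The move ψ₁₂ : f₃↦f₃−c₄, f₄↦f₄+c₂, t₁↦t₁+f₂. -/
def psi12 : Equiv.Perm Tuple where
  toFun x := { x with f3 := x.f3 - x.c4, f4 := x.f4 + x.c2, t1 := x.t1 + x.f2 }
  invFun x := { x with f3 := x.f3 + x.c4, f4 := x.f4 - x.c2, t1 := x.t1 - x.f2 }
  left_inv x := by cases x; simp
  right_inv x := by cases x; simp

/-- The move ψ₃₂ : f₁↦f₁+c₆, f₄↦f₄−c₂, t₂↦t₂−f₂. -/
def psi32 : Equiv.Perm Tuple where
  toFun x := { x with f1 := x.f1 + x.c6, f4 := x.f4 - x.c2, t2 := x.t2 - x.f2 }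
  invFun x := { x with f1 := x.f1 - x.c6, f4 := x.f4 + x.c2, t2 := x.t2 + x.f2 }
  left_inv x := by cases x; simp
  right_inv x := by cases x; simp

/-- The move ψ₄₃ : f₁↦f₁+c₅, f₂↦f₂−c₄, t₁↦t₁+f₃. -/
def psi43 : Equiv.Perm Tuple where
  toFun x := { x with f1 := x.f1 + x.c5, f2 := x.f2 - x.c4, t1 := x.t1 + x.f3 }
  invFun x := { x with f1 := x.f1 - x.c5, f2 := x.f2 + x.c4, t1 := x.t1 - x.f3 }
  left_inv x := by cases x; simp
  right_inv x := by cases x; simp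

/-- The move ψ₂₃ : f₁↦f₁−c₅, f₄↦f₄+c₃, t₂↦t₂−f₃. -/
def psi23 : Equiv.Perm Tuple where
  toFun x := { x with f1 := x.f1 - x.c5, f4 := x.f4 + x.c3, t2 := x.t2 - x.f3 }
  invFun x := { x with f1 := x.f1 + x.c5, f4 := x.f4 - x.c3, t2 := x.t2 + x.f3 }
  left_inv x := by cases x; simp
  right_inv x := by cases x; simp

/-- The move ψ₃₄ : f₁↦f₁−c₁, f₂↦f₂+c₂, t₁↦t₁+f₄. -/
def psi34 : Equiv.Perm Tuple where
  toFun x := { x with f1 := x.f1 - x.c1, f2 := x.f2 + x.c2, t1 := x.t1 + x.f4 }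
  invFun x := { x with f1 := x.f1 + x.c1, f2 := x.f2 - x.c2, t1 := x.t1 - x.f4 }
  left_inv x := by cases x; simp
  right_inv x := by cases x; simp

/-- The move ψ₁₄ : f₂↦f₂−c₂, f₃↦f₃+c₃, t₂↦t₂−f₄. -/
def psi14 : Equiv.Perm Tuple where
  toFun x := { x with f2 := x.f2 - x.c2, f3 := x.f3 + x.c3, t2 := x.t2 - x.f4 }
  invFun x := { x with f2 := x.f2 + x.c2, f3 := x.f3 - x.c3, t2 := x.t2 + x.f4 }
  left_inv x := by cases x; simp
  right_inv x := by cases x; simp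

/-- The list of the eight ψ-moves. -/
def psiMoves : List (Equiv.Perm Tuple) :=
  [psi21, psi41, psi12, psi32, psi43, psi23, psi34, psi14]

/-- Two tuples are ψ-equivalent if one is obtained from the other by a finite
composition of the eight ψ-moves and their inverses, i.e. they are related by the
equivalence relation generated by single applications of the moves. -/
def PsiEquiv : Tuple → Tuple → Prop :=
  Relation.EqvGen (fun x y => ∃ g ∈ psiMoves, g x = y)


set_option linter.unreachableTactic false
set_option linter.unnecessarySeqFocus false
set_option linter.unusedTactic false
set_option maxHeartbeats 1000000

namespace PsiAux

lemma psiequiv_refl (x : Tuple) : PsiEquiv x x := Relation.EqvGen.refl x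
lemma psiequiv_symm {x y : Tuple} (h : PsiEquiv x y) : PsiEquiv y x := Relation.EqvGen.symm x y h
lemma psiequiv_trans {x y z : Tuple} (h : PsiEquiv x y) (h' : PsiEquiv y z) : PsiEquiv x z :=
  Relation.EqvGen.trans x y z h h'
lemma step_of_mem {m : Equiv.Perm Tuple} (hm : m ∈ psiMoves) (x : Tuple) : PsiEquiv x (m x) :=
  Relation.EqvGen.rel x (m x) ⟨m, hm, rfl⟩
lemma iter (P : ℤ → Tuple) (h : ∀ k : ℤ, PsiEquiv (P k) (P (k+1))) : ∀ k : ℤ, PsiEquiv (P 0) (P k) := by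
  intro k
  induction k using Int.induction_on with
  | zero => exact psiequiv_refl _
  | succ n ih => exact psiequiv_trans ih (h n)
  | pred n ih =>
      have := psiequiv_symm (h (-n-1))
      have h2 : (-n-1+1 : ℤ) = -n := by ring
      rw [h2] at this
      simpa using psiequiv_trans ih this


lemma iter21 (c1 c2 c3 c4 c5 c6 f1 f2 f3 f4 t1 t2 : ℤ) (k : ℤ) :
    PsiEquiv ⟨c1, c2, c3, c4, c5, c6, f1, f2, f3, f4, t1, t2⟩
      ⟨c1, c2, c3, c4, c5, c6, f1, f2, f3+(k)*c5, f4-(k)*c1, t1+(k)*f1, t2⟩ := by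
  have h := iter (fun k => ⟨c1, c2, c3, c4, c5, c6, f1, f2, f3+(k)*c5, f4-(k)*c1, t1+(k)*f1, t2⟩)
    (fun n => by
      show PsiEquiv ⟨c1, c2, c3, c4, c5, c6, f1, f2, f3+(n)*c5, f4-(n)*c1, t1+(n)*f1, t2⟩ ⟨c1, c2, c3, c4, c5, c6, f1, f2, f3+(n+1)*c5, f4-(n+1)*c1, t1+(n+1)*f1, t2⟩
      have heq : psi21 ⟨c1, c2, c3, c4, c5, c6, f1, f2, f3+(n)*c5, f4-(n)*c1, t1+(n)*f1, t2⟩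
          = ⟨c1, c2, c3, c4, c5, c6, f1, f2, f3+(n+1)*c5, f4-(n+1)*c1, t1+(n+1)*f1, t2⟩ := by
        simp only [psi21, Equiv.coe_fn_mk, Tuple.mk.injEq] <;> (and_intros <;> first | rfl | trivial | ring)
      rw [← heq]
      exact step_of_mem (by simp [psiMoves]) _) k
  simpa using h

lemma iter41 (c1 c2 c3 c4 c5 c6 f1 f2 f3 f4 t1 t2 : ℤ) (k : ℤ) :
    PsiEquiv ⟨c1, c2, c3, c4, c5, c6, f1, f2, f3, f4, t1, t2⟩
      ⟨c1, c2, c3, c4, c5, c6, f1, f2+(k)*c6, f3-(k)*c5, f4, t1, t2-(k)*f1⟩ := by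
  have h := iter (fun k => ⟨c1, c2, c3, c4, c5, c6, f1, f2+(k)*c6, f3-(k)*c5, f4, t1, t2-(k)*f1⟩)
    (fun n => by
      show PsiEquiv ⟨c1, c2, c3, c4, c5, c6, f1, f2+(n)*c6, f3-(n)*c5, f4, t1, t2-(n)*f1⟩ ⟨c1, c2, c3, c4, c5, c6, f1, f2+(n+1)*c6, f3-(n+1)*c5, f4, t1, t2-(n+1)*f1⟩
      have heq : psi41 ⟨c1, c2, c3, c4, c5, c6, f1, f2+(n)*c6, f3-(n)*c5, f4, t1, t2-(n)*f1⟩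
          = ⟨c1, c2, c3, c4, c5, c6, f1, f2+(n+1)*c6, f3-(n+1)*c5, f4, t1, t2-(n+1)*f1⟩ := by
        simp only [psi41, Equiv.coe_fn_mk, Tuple.mk.injEq] <;> (and_intros <;> first | rfl | trivial | ring)
      rw [← heq]
      exact step_of_mem (by simp [psiMoves]) _) k
  simpa using h

lemma iter12 (c1 c2 c3 c4 c5 c6 f1 f2 f3 f4 t1 t2 : ℤ) (k : ℤ) :
    PsiEquiv ⟨c1, c2, c3, c4, c5, c6, f1, f2, f3, f4, t1, t2⟩
      ⟨c1, c2, c3, c4, c5, c6, f1, f2, f3-(k)*c4, f4+(k)*c2, t1+(k)*f2, t2⟩ := by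
  have h := iter (fun k => ⟨c1, c2, c3, c4, c5, c6, f1, f2, f3-(k)*c4, f4+(k)*c2, t1+(k)*f2, t2⟩)
    (fun n => by
      show PsiEquiv ⟨c1, c2, c3, c4, c5, c6, f1, f2, f3-(n)*c4, f4+(n)*c2, t1+(n)*f2, t2⟩ ⟨c1, c2, c3, c4, c5, c6, f1, f2, f3-(n+1)*c4, f4+(n+1)*c2, t1+(n+1)*f2, t2⟩
      have heq : psi12 ⟨c1, c2, c3, c4, c5, c6, f1, f2, f3-(n)*c4, f4+(n)*c2, t1+(n)*f2, t2⟩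
          = ⟨c1, c2, c3, c4, c5, c6, f1, f2, f3-(n+1)*c4, f4+(n+1)*c2, t1+(n+1)*f2, t2⟩ := by
        simp only [psi12, Equiv.coe_fn_mk, Tuple.mk.injEq] <;> (and_intros <;> first | rfl | trivial | ring)
      rw [← heq]
      exact step_of_mem (by simp [psiMoves]) _) k
  simpa using h

lemma iter32 (c1 c2 c3 c4 c5 c6 f1 f2 f3 f4 t1 t2 : ℤ) (k : ℤ) :
    PsiEquiv ⟨c1, c2, c3, c4, c5, c6, f1, f2, f3, f4, t1, t2⟩
      ⟨c1, c2, c3, c4, c5, c6, f1+(k)*c6, f2, f3, f4-(k)*c2, t1, t2-(k)*f2⟩ := by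
  have h := iter (fun k => ⟨c1, c2, c3, c4, c5, c6, f1+(k)*c6, f2, f3, f4-(k)*c2, t1, t2-(k)*f2⟩)
    (fun n => by
      show PsiEquiv ⟨c1, c2, c3, c4, c5, c6, f1+(n)*c6, f2, f3, f4-(n)*c2, t1, t2-(n)*f2⟩ ⟨c1, c2, c3, c4, c5, c6, f1+(n+1)*c6, f2, f3, f4-(n+1)*c2, t1, t2-(n+1)*f2⟩
      have heq : psi32 ⟨c1, c2, c3, c4, c5, c6, f1+(n)*c6, f2, f3, f4-(n)*c2, t1, t2-(n)*f2⟩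
          = ⟨c1, c2, c3, c4, c5, c6, f1+(n+1)*c6, f2, f3, f4-(n+1)*c2, t1, t2-(n+1)*f2⟩ := by
        simp only [psi32, Equiv.coe_fn_mk, Tuple.mk.injEq] <;> (and_intros <;> first | rfl | trivial | ring)
      rw [← heq]
      exact step_of_mem (by simp [psiMoves]) _) k
  simpa using h

lemma iter43 (c1 c2 c3 c4 c5 c6 f1 f2 f3 f4 t1 t2 : ℤ) (k : ℤ) :
    PsiEquiv ⟨c1, c2, c3, c4, c5, c6, f1, f2, f3, f4, t1, t2⟩
      ⟨c1, c2, c3, c4, c5, c6, f1+(k)*c5, f2-(k)*c4, f3, f4, t1+(k)*f3, t2⟩ := by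
  have h := iter (fun k => ⟨c1, c2, c3, c4, c5, c6, f1+(k)*c5, f2-(k)*c4, f3, f4, t1+(k)*f3, t2⟩)
    (fun n => by
      show PsiEquiv ⟨c1, c2, c3, c4, c5, c6, f1+(n)*c5, f2-(n)*c4, f3, f4, t1+(n)*f3, t2⟩ ⟨c1, c2, c3, c4, c5, c6, f1+(n+1)*c5, f2-(n+1)*c4, f3, f4, t1+(n+1)*f3, t2⟩
      have heq : psi43 ⟨c1, c2, c3, c4, c5, c6, f1+(n)*c5, f2-(n)*c4, f3, f4, t1+(n)*f3, t2⟩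
          = ⟨c1, c2, c3, c4, c5, c6, f1+(n+1)*c5, f2-(n+1)*c4, f3, f4, t1+(n+1)*f3, t2⟩ := by
        simp only [psi43, Equiv.coe_fn_mk, Tuple.mk.injEq] <;> (and_intros <;> first | rfl | trivial | ring)
      rw [← heq]
      exact step_of_mem (by simp [psiMoves]) _) k
  simpa using h

lemma iter23 (c1 c2 c3 c4 c5 c6 f1 f2 f3 f4 t1 t2 : ℤ) (k : ℤ) :
    PsiEquiv ⟨c1, c2, c3, c4, c5, c6, f1, f2, f3, f4, t1, t2⟩
      ⟨c1, c2, c3, c4, c5, c6, f1-(k)*c5, f2, f3, f4+(k)*c3, t1, t2-(k)*f3⟩ := by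
  have h := iter (fun k => ⟨c1, c2, c3, c4, c5, c6, f1-(k)*c5, f2, f3, f4+(k)*c3, t1, t2-(k)*f3⟩)
    (fun n => by
      show PsiEquiv ⟨c1, c2, c3, c4, c5, c6, f1-(n)*c5, f2, f3, f4+(n)*c3, t1, t2-(n)*f3⟩ ⟨c1, c2, c3, c4, c5, c6, f1-(n+1)*c5, f2, f3, f4+(n+1)*c3, t1, t2-(n+1)*f3⟩
      have heq : psi23 ⟨c1, c2, c3, c4, c5, c6, f1-(n)*c5, f2, f3, f4+(n)*c3, t1, t2-(n)*f3⟩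
          = ⟨c1, c2, c3, c4, c5, c6, f1-(n+1)*c5, f2, f3, f4+(n+1)*c3, t1, t2-(n+1)*f3⟩ := by
        simp only [psi23, Equiv.coe_fn_mk, Tuple.mk.injEq] <;> (and_intros <;> first | rfl | trivial | ring)
      rw [← heq]
      exact step_of_mem (by simp [psiMoves]) _) k
  simpa using h

lemma iter34 (c1 c2 c3 c4 c5 c6 f1 f2 f3 f4 t1 t2 : ℤ) (k : ℤ) :
    PsiEquiv ⟨c1, c2, c3, c4, c5, c6, f1, f2, f3, f4, t1, t2⟩
      ⟨c1, c2, c3, c4, c5, c6, f1-(k)*c1, f2+(k)*c2, f3, f4, t1+(k)*f4, t2⟩ := by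
  have h := iter (fun k => ⟨c1, c2, c3, c4, c5, c6, f1-(k)*c1, f2+(k)*c2, f3, f4, t1+(k)*f4, t2⟩)
    (fun n => by
      show PsiEquiv ⟨c1, c2, c3, c4, c5, c6, f1-(n)*c1, f2+(n)*c2, f3, f4, t1+(n)*f4, t2⟩ ⟨c1, c2, c3, c4, c5, c6, f1-(n+1)*c1, f2+(n+1)*c2, f3, f4, t1+(n+1)*f4, t2⟩
      have heq : psi34 ⟨c1, c2, c3, c4, c5, c6, f1-(n)*c1, f2+(n)*c2, f3, f4, t1+(n)*f4, t2⟩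
          = ⟨c1, c2, c3, c4, c5, c6, f1-(n+1)*c1, f2+(n+1)*c2, f3, f4, t1+(n+1)*f4, t2⟩ := by
        simp only [psi34, Equiv.coe_fn_mk, Tuple.mk.injEq] <;> (and_intros <;> first | rfl | trivial | ring)
      rw [← heq]
      exact step_of_mem (by simp [psiMoves]) _) k
  simpa using h

lemma iter14 (c1 c2 c3 c4 c5 c6 f1 f2 f3 f4 t1 t2 : ℤ) (k : ℤ) :
    PsiEquiv ⟨c1, c2, c3, c4, c5, c6, f1, f2, f3, f4, t1, t2⟩
      ⟨c1, c2, c3, c4, c5, c6, f1, f2-(k)*c2, f3+(k)*c3, f4, t1, t2-(k)*f4⟩ := by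
  have h := iter (fun k => ⟨c1, c2, c3, c4, c5, c6, f1, f2-(k)*c2, f3+(k)*c3, f4, t1, t2-(k)*f4⟩)
    (fun n => by
      show PsiEquiv ⟨c1, c2, c3, c4, c5, c6, f1, f2-(n)*c2, f3+(n)*c3, f4, t1, t2-(n)*f4⟩ ⟨c1, c2, c3, c4, c5, c6, f1, f2-(n+1)*c2, f3+(n+1)*c3, f4, t1, t2-(n+1)*f4⟩
      have heq : psi14 ⟨c1, c2, c3, c4, c5, c6, f1, f2-(n)*c2, f3+(n)*c3, f4, t1, t2-(n)*f4⟩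
          = ⟨c1, c2, c3, c4, c5, c6, f1, f2-(n+1)*c2, f3+(n+1)*c3, f4, t1, t2-(n+1)*f4⟩ := by
        simp only [psi14, Equiv.coe_fn_mk, Tuple.mk.injEq] <;> (and_intros <;> first | rfl | trivial | ring)
      rw [← heq]
      exact step_of_mem (by simp [psiMoves]) _) k
  simpa using h

lemma word1 (c1 c2 c3 c4 c5 c6 f1 f2 f3 f4 t1 t2 : ℤ) :
    PsiEquiv ⟨c1, c2, c3, c4, c5, c6, f1, f2, f3, f4, t1, t2⟩
      ⟨c1, c2, c3, c4, c5, c6, f1, f2, f3, f4, t1, t2 - c1⟩ := by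
  have h0 : PsiEquiv (⟨c1, c2, c3, c4, c5, c6, f1, f2, f3, f4, t1, t2⟩ : Tuple) ⟨c1, c2, c3, c4, c5, c6, f1, (f2 + (c2)), (f3 - (c3)), f4, t1, (t2 + (f4))⟩ := by
    have heq : psi14 (⟨c1, c2, c3, c4, c5, c6, f1, (f2 + (c2)), (f3 - (c3)), f4, t1, (t2 + (f4))⟩ : Tuple) = (⟨c1, c2, c3, c4, c5, c6, f1, f2, f3, f4, t1, t2⟩ : Tuple) := by
      simp only [psi14, Equiv.coe_fn_mk, Tuple.mk.injEq] <;> (and_intros <;> first | rfl | trivial | ring)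
    rw [← heq]; exact psiequiv_symm (step_of_mem (by simp [psiMoves]) _)
  have h1 : PsiEquiv (⟨c1, c2, c3, c4, c5, c6, f1, (f2 + (c2)), (f3 - (c3)), f4, t1, (t2 + (f4))⟩ : Tuple) ⟨c1, c2, c3, c4, c5, c6, f1, (f2 + (c2)), ((f3 - (c3)) - (c5)), (f4 + (c1)), (t1 - (f1)), (t2 + (f4))⟩ := by
    have heq : psi21 (⟨c1, c2, c3, c4, c5, c6, f1, (f2 + (c2)), ((f3 - (c3)) - (c5)), (f4 + (c1)), (t1 - (f1)), (t2 + (f4))⟩ : Tuple) = (⟨c1, c2, c3, c4, c5, c6, f1, (f2 + (c2)), (f3 - (c3)), f4, t1, (t2 + (f4))⟩ : Tuple) := by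
      simp only [psi21, Equiv.coe_fn_mk, Tuple.mk.injEq] <;> (and_intros <;> first | rfl | trivial | ring)
    rw [← heq]; exact psiequiv_symm (step_of_mem (by simp [psiMoves]) _)
  have h2 : PsiEquiv (⟨c1, c2, c3, c4, c5, c6, f1, (f2 + (c2)), ((f3 - (c3)) - (c5)), (f4 + (c1)), (t1 - (f1)), (t2 + (f4))⟩ : Tuple) ⟨c1, c2, c3, c4, c5, c6, f1, ((f2 + (c2)) - (c2)), (((f3 - (c3)) - (c5)) + (c3)), (f4 + (c1)), (t1 - (f1)), ((t2 + (f4)) - ((f4 + (c1))))⟩ := by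
    have heq : psi14 (⟨c1, c2, c3, c4, c5, c6, f1, (f2 + (c2)), ((f3 - (c3)) - (c5)), (f4 + (c1)), (t1 - (f1)), (t2 + (f4))⟩ : Tuple) = (⟨c1, c2, c3, c4, c5, c6, f1, ((f2 + (c2)) - (c2)), (((f3 - (c3)) - (c5)) + (c3)), (f4 + (c1)), (t1 - (f1)), ((t2 + (f4)) - ((f4 + (c1))))⟩ : Tuple) := by
      simp only [psi14, Equiv.coe_fn_mk, Tuple.mk.injEq] <;> (and_intros <;> first | rfl | trivial | ring)
    rw [← heq]; exact step_of_mem (by simp [psiMoves]) _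
  have h3 : PsiEquiv (⟨c1, c2, c3, c4, c5, c6, f1, ((f2 + (c2)) - (c2)), (((f3 - (c3)) - (c5)) + (c3)), (f4 + (c1)), (t1 - (f1)), ((t2 + (f4)) - ((f4 + (c1))))⟩ : Tuple) ⟨c1, c2, c3, c4, c5, c6, f1, ((f2 + (c2)) - (c2)), ((((f3 - (c3)) - (c5)) + (c3)) + (c5)), ((f4 + (c1)) - (c1)), ((t1 - (f1)) + (f1)), ((t2 + (f4)) - ((f4 + (c1))))⟩ := by
    have heq : psi21 (⟨c1, c2, c3, c4, c5, c6, f1, ((f2 + (c2)) - (c2)), (((f3 - (c3)) - (c5)) + (c3)), (f4 + (c1)), (t1 - (f1)), ((t2 + (f4)) - ((f4 + (c1))))⟩ : Tuple) = (⟨c1, c2, c3, c4, c5, c6, f1, ((f2 + (c2)) - (c2)), ((((f3 - (c3)) - (c5)) + (c3)) + (c5)), ((f4 + (c1)) - (c1)), ((t1 - (f1)) + (f1)), ((t2 + (f4)) - ((f4 + (c1))))⟩ : Tuple) := by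
      simp only [psi21, Equiv.coe_fn_mk, Tuple.mk.injEq] <;> (and_intros <;> first | rfl | trivial | ring)
    rw [← heq]; exact step_of_mem (by simp [psiMoves]) _
  have hfin : (⟨c1, c2, c3, c4, c5, c6, f1, ((f2 + (c2)) - (c2)), ((((f3 - (c3)) - (c5)) + (c3)) + (c5)), ((f4 + (c1)) - (c1)), ((t1 - (f1)) + (f1)), ((t2 + (f4)) - ((f4 + (c1))))⟩ : Tuple) = (⟨c1, c2, c3, c4, c5, c6, f1, f2, f3, f4, t1, t2 - c1⟩ : Tuple) := by
    simp only [Tuple.mk.injEq] <;> (and_intros <;> first | rfl | trivial | ring)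
  rw [← hfin]
  exact psiequiv_trans h0 (psiequiv_trans h1 (psiequiv_trans h2 h3))
lemma word2 (c1 c2 c3 c4 c5 c6 f1 f2 f3 f4 t1 t2 : ℤ) :
    PsiEquiv ⟨c1, c2, c3, c4, c5, c6, f1, f2, f3, f4, t1, t2⟩
      ⟨c1, c2, c3, c4, c5, c6, f1, f2, f3, f4, t1 - c2, t2 + c2⟩ := by
  have h0 : PsiEquiv (⟨c1, c2, c3, c4, c5, c6, f1, f2, f3, f4, t1, t2⟩ : Tuple) ⟨c1, c2, c3, c4, c5, c6, f1, (f2 + (c2)), (f3 - (c3)), f4, t1, (t2 + (f4))⟩ := by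
    have heq : psi14 (⟨c1, c2, c3, c4, c5, c6, f1, (f2 + (c2)), (f3 - (c3)), f4, t1, (t2 + (f4))⟩ : Tuple) = (⟨c1, c2, c3, c4, c5, c6, f1, f2, f3, f4, t1, t2⟩ : Tuple) := by
      simp only [psi14, Equiv.coe_fn_mk, Tuple.mk.injEq] <;> (and_intros <;> first | rfl | trivial | ring)
    rw [← heq]; exact psiequiv_symm (step_of_mem (by simp [psiMoves]) _)
  have h1 : PsiEquiv (⟨c1, c2, c3, c4, c5, c6, f1, (f2 + (c2)), (f3 - (c3)), f4, t1, (t2 + (f4))⟩ : Tuple) ⟨c1, c2, c3, c4, c5, c6, f1, (f2 + (c2)), ((f3 - (c3)) + (c4)), (f4 - (c2)), (t1 - ((f2 + (c2)))), (t2 + (f4))⟩ := by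
    have heq : psi12 (⟨c1, c2, c3, c4, c5, c6, f1, (f2 + (c2)), ((f3 - (c3)) + (c4)), (f4 - (c2)), (t1 - ((f2 + (c2)))), (t2 + (f4))⟩ : Tuple) = (⟨c1, c2, c3, c4, c5, c6, f1, (f2 + (c2)), (f3 - (c3)), f4, t1, (t2 + (f4))⟩ : Tuple) := by
      simp only [psi12, Equiv.coe_fn_mk, Tuple.mk.injEq] <;> (and_intros <;> first | rfl | trivial | ring)
    rw [← heq]; exact psiequiv_symm (step_of_mem (by simp [psiMoves]) _)
  have h2 : PsiEquiv (⟨c1, c2, c3, c4, c5, c6, f1, (f2 + (c2)), ((f3 - (c3)) + (c4)), (f4 - (c2)), (t1 - ((f2 + (c2)))), (t2 + (f4))⟩ : Tuple) ⟨c1, c2, c3, c4, c5, c6, f1, ((f2 + (c2)) - (c2)), (((f3 - (c3)) + (c4)) + (c3)), (f4 - (c2)), (t1 - ((f2 + (c2)))), ((t2 + (f4)) - ((f4 - (c2))))⟩ := by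
    have heq : psi14 (⟨c1, c2, c3, c4, c5, c6, f1, (f2 + (c2)), ((f3 - (c3)) + (c4)), (f4 - (c2)), (t1 - ((f2 + (c2)))), (t2 + (f4))⟩ : Tuple) = (⟨c1, c2, c3, c4, c5, c6, f1, ((f2 + (c2)) - (c2)), (((f3 - (c3)) + (c4)) + (c3)), (f4 - (c2)), (t1 - ((f2 + (c2)))), ((t2 + (f4)) - ((f4 - (c2))))⟩ : Tuple) := by
      simp only [psi14, Equiv.coe_fn_mk, Tuple.mk.injEq] <;> (and_intros <;> first | rfl | trivial | ring)
    rw [← heq]; exact step_of_mem (by simp [psiMoves]) _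
  have h3 : PsiEquiv (⟨c1, c2, c3, c4, c5, c6, f1, ((f2 + (c2)) - (c2)), (((f3 - (c3)) + (c4)) + (c3)), (f4 - (c2)), (t1 - ((f2 + (c2)))), ((t2 + (f4)) - ((f4 - (c2))))⟩ : Tuple) ⟨c1, c2, c3, c4, c5, c6, f1, ((f2 + (c2)) - (c2)), ((((f3 - (c3)) + (c4)) + (c3)) - (c4)), ((f4 - (c2)) + (c2)), ((t1 - ((f2 + (c2)))) + (((f2 + (c2)) - (c2)))), ((t2 + (f4)) - ((f4 - (c2))))⟩ := by
    have heq : psi12 (⟨c1, c2, c3, c4, c5, c6, f1, ((f2 + (c2)) - (c2)), (((f3 - (c3)) + (c4)) + (c3)), (f4 - (c2)), (t1 - ((f2 + (c2)))), ((t2 + (f4)) - ((f4 - (c2))))⟩ : Tuple) = (⟨c1, c2, c3, c4, c5, c6, f1, ((f2 + (c2)) - (c2)), ((((f3 - (c3)) + (c4)) + (c3)) - (c4)), ((f4 - (c2)) + (c2)), ((t1 - ((f2 + (c2)))) + (((f2 + (c2)) - (c2)))), ((t2 + (f4)) - ((f4 - (c2))))⟩ : Tuple) := by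
      simp only [psi12, Equiv.coe_fn_mk, Tuple.mk.injEq] <;> (and_intros <;> first | rfl | trivial | ring)
    rw [← heq]; exact step_of_mem (by simp [psiMoves]) _
  have hfin : (⟨c1, c2, c3, c4, c5, c6, f1, ((f2 + (c2)) - (c2)), ((((f3 - (c3)) + (c4)) + (c3)) - (c4)), ((f4 - (c2)) + (c2)), ((t1 - ((f2 + (c2)))) + (((f2 + (c2)) - (c2)))), ((t2 + (f4)) - ((f4 - (c2))))⟩ : Tuple) = (⟨c1, c2, c3, c4, c5, c6, f1, f2, f3, f4, t1 - c2, t2 + c2⟩ : Tuple) := by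
    simp only [Tuple.mk.injEq] <;> (and_intros <;> first | rfl | trivial | ring)
  rw [← hfin]
  exact psiequiv_trans h0 (psiequiv_trans h1 (psiequiv_trans h2 h3))
lemma word3 (c1 c2 c3 c4 c5 c6 f1 f2 f3 f4 t1 t2 : ℤ) :
    PsiEquiv ⟨c1, c2, c3, c4, c5, c6, f1, f2, f3, f4, t1, t2⟩
      ⟨c1, c2, c3, c4, c5, c6, f1, f2, f3, f4, t1 + c3, t2⟩ := by
  have h0 : PsiEquiv (⟨c1, c2, c3, c4, c5, c6, f1, f2, f3, f4, t1, t2⟩ : Tuple) ⟨c1, c2, c3, c4, c5, c6, f1, (f2 + (c2)), (f3 - (c3)), f4, t1, (t2 + (f4))⟩ := by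
    have heq : psi14 (⟨c1, c2, c3, c4, c5, c6, f1, (f2 + (c2)), (f3 - (c3)), f4, t1, (t2 + (f4))⟩ : Tuple) = (⟨c1, c2, c3, c4, c5, c6, f1, f2, f3, f4, t1, t2⟩ : Tuple) := by
      simp only [psi14, Equiv.coe_fn_mk, Tuple.mk.injEq] <;> (and_intros <;> first | rfl | trivial | ring)
    rw [← heq]; exact psiequiv_symm (step_of_mem (by simp [psiMoves]) _)
  have h1 : PsiEquiv (⟨c1, c2, c3, c4, c5, c6, f1, (f2 + (c2)), (f3 - (c3)), f4, t1, (t2 + (f4))⟩ : Tuple) ⟨c1, c2, c3, c4, c5, c6, (f1 - (c5)), ((f2 + (c2)) + (c4)), (f3 - (c3)), f4, (t1 - ((f3 - (c3)))), (t2 + (f4))⟩ := by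
    have heq : psi43 (⟨c1, c2, c3, c4, c5, c6, (f1 - (c5)), ((f2 + (c2)) + (c4)), (f3 - (c3)), f4, (t1 - ((f3 - (c3)))), (t2 + (f4))⟩ : Tuple) = (⟨c1, c2, c3, c4, c5, c6, f1, (f2 + (c2)), (f3 - (c3)), f4, t1, (t2 + (f4))⟩ : Tuple) := by
      simp only [psi43, Equiv.coe_fn_mk, Tuple.mk.injEq] <;> (and_intros <;> first | rfl | trivial | ring)
    rw [← heq]; exact psiequiv_symm (step_of_mem (by simp [psiMoves]) _)
  have h2 : PsiEquiv (⟨c1, c2, c3, c4, c5, c6, (f1 - (c5)), ((f2 + (c2)) + (c4)), (f3 - (c3)), f4, (t1 - ((f3 - (c3)))), (t2 + (f4))⟩ : Tuple) ⟨c1, c2, c3, c4, c5, c6, (f1 - (c5)), (((f2 + (c2)) + (c4)) - (c2)), ((f3 - (c3)) + (c3)), f4, (t1 - ((f3 - (c3)))), ((t2 + (f4)) - (f4))⟩ := by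
    have heq : psi14 (⟨c1, c2, c3, c4, c5, c6, (f1 - (c5)), ((f2 + (c2)) + (c4)), (f3 - (c3)), f4, (t1 - ((f3 - (c3)))), (t2 + (f4))⟩ : Tuple) = (⟨c1, c2, c3, c4, c5, c6, (f1 - (c5)), (((f2 + (c2)) + (c4)) - (c2)), ((f3 - (c3)) + (c3)), f4, (t1 - ((f3 - (c3)))), ((t2 + (f4)) - (f4))⟩ : Tuple) := by
      simp only [psi14, Equiv.coe_fn_mk, Tuple.mk.injEq] <;> (and_intros <;> first | rfl | trivial | ring)
    rw [← heq]; exact step_of_mem (by simp [psiMoves]) _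
  have h3 : PsiEquiv (⟨c1, c2, c3, c4, c5, c6, (f1 - (c5)), (((f2 + (c2)) + (c4)) - (c2)), ((f3 - (c3)) + (c3)), f4, (t1 - ((f3 - (c3)))), ((t2 + (f4)) - (f4))⟩ : Tuple) ⟨c1, c2, c3, c4, c5, c6, ((f1 - (c5)) + (c5)), ((((f2 + (c2)) + (c4)) - (c2)) - (c4)), ((f3 - (c3)) + (c3)), f4, ((t1 - ((f3 - (c3)))) + (((f3 - (c3)) + (c3)))), ((t2 + (f4)) - (f4))⟩ := by
    have heq : psi43 (⟨c1, c2, c3, c4, c5, c6, (f1 - (c5)), (((f2 + (c2)) + (c4)) - (c2)), ((f3 - (c3)) + (c3)), f4, (t1 - ((f3 - (c3)))), ((t2 + (f4)) - (f4))⟩ : Tuple) = (⟨c1, c2, c3, c4, c5, c6, ((f1 - (c5)) + (c5)), ((((f2 + (c2)) + (c4)) - (c2)) - (c4)), ((f3 - (c3)) + (c3)), f4, ((t1 - ((f3 - (c3)))) + (((f3 - (c3)) + (c3)))), ((t2 + (f4)) - (f4))⟩ : Tuple) := by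
      simp only [psi43, Equiv.coe_fn_mk, Tuple.mk.injEq] <;> (and_intros <;> first | rfl | trivial | ring)
    rw [← heq]; exact step_of_mem (by simp [psiMoves]) _
  have hfin : (⟨c1, c2, c3, c4, c5, c6, ((f1 - (c5)) + (c5)), ((((f2 + (c2)) + (c4)) - (c2)) - (c4)), ((f3 - (c3)) + (c3)), f4, ((t1 - ((f3 - (c3)))) + (((f3 - (c3)) + (c3)))), ((t2 + (f4)) - (f4))⟩ : Tuple) = (⟨c1, c2, c3, c4, c5, c6, f1, f2, f3, f4, t1 + c3, t2⟩ : Tuple) := by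
    simp only [Tuple.mk.injEq] <;> (and_intros <;> first | rfl | trivial | ring)
  rw [← hfin]
  exact psiequiv_trans h0 (psiequiv_trans h1 (psiequiv_trans h2 h3))

lemma witer1 (c1 c2 c3 c4 c5 c6 f1 f2 f3 f4 t1 t2 : ℤ) (k : ℤ) :
    PsiEquiv ⟨c1, c2, c3, c4, c5, c6, f1, f2, f3, f4, t1, t2⟩
      ⟨c1, c2, c3, c4, c5, c6, f1, f2, f3, f4, t1, t2-(k)*c1⟩ := by
  have h := iter (fun k => ⟨c1, c2, c3, c4, c5, c6, f1, f2, f3, f4, t1, t2-(k)*c1⟩)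
    (fun n => by
      show PsiEquiv ⟨c1, c2, c3, c4, c5, c6, f1, f2, f3, f4, t1, t2-(n)*c1⟩ ⟨c1, c2, c3, c4, c5, c6, f1, f2, f3, f4, t1, t2-(n+1)*c1⟩
      have hw := word1 c1 c2 c3 c4 c5 c6 f1 f2 f3 f4 t1 (t2-(n)*c1)
      have heq : ⟨c1, c2, c3, c4, c5, c6, f1, f2, f3, f4, t1, t2-(n+1)*c1⟩
          = (⟨c1, c2, c3, c4, c5, c6, f1, f2, f3, f4, t1, ((t2-(n)*c1)) - c1⟩ : Tuple) := by
        simp only [Tuple.mk.injEq] <;> (and_intros <;> first | rfl | trivial | ring)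
      rw [heq]
      exact hw) k
  simpa using h

lemma witer2 (c1 c2 c3 c4 c5 c6 f1 f2 f3 f4 t1 t2 : ℤ) (k : ℤ) :
    PsiEquiv ⟨c1, c2, c3, c4, c5, c6, f1, f2, f3, f4, t1, t2⟩
      ⟨c1, c2, c3, c4, c5, c6, f1, f2, f3, f4, t1-(k)*c2, t2+(k)*c2⟩ := by
  have h := iter (fun k => ⟨c1, c2, c3, c4, c5, c6, f1, f2, f3, f4, t1-(k)*c2, t2+(k)*c2⟩)
    (fun n => by
      show PsiEquiv ⟨c1, c2, c3, c4, c5, c6, f1, f2, f3, f4, t1-(n)*c2, t2+(n)*c2⟩ ⟨c1, c2, c3, c4, c5, c6, f1, f2, f3, f4, t1-(n+1)*c2, t2+(n+1)*c2⟩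
      have hw := word2 c1 c2 c3 c4 c5 c6 f1 f2 f3 f4 (t1-(n)*c2) (t2+(n)*c2)
      have heq : ⟨c1, c2, c3, c4, c5, c6, f1, f2, f3, f4, t1-(n+1)*c2, t2+(n+1)*c2⟩
          = (⟨c1, c2, c3, c4, c5, c6, f1, f2, f3, f4, ((t1-(n)*c2)) - c2, ((t2+(n)*c2)) + c2⟩ : Tuple) := by
        simp only [Tuple.mk.injEq] <;> (and_intros <;> first | rfl | trivial | ring)
      rw [heq]
      exact hw) k
  simpa using h

lemma witer3 (c1 c2 c3 c4 c5 c6 f1 f2 f3 f4 t1 t2 : ℤ) (k : ℤ) :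
    PsiEquiv ⟨c1, c2, c3, c4, c5, c6, f1, f2, f3, f4, t1, t2⟩
      ⟨c1, c2, c3, c4, c5, c6, f1, f2, f3, f4, t1+(k)*c3, t2⟩ := by
  have h := iter (fun k => ⟨c1, c2, c3, c4, c5, c6, f1, f2, f3, f4, t1+(k)*c3, t2⟩)
    (fun n => by
      show PsiEquiv ⟨c1, c2, c3, c4, c5, c6, f1, f2, f3, f4, t1+(n)*c3, t2⟩ ⟨c1, c2, c3, c4, c5, c6, f1, f2, f3, f4, t1+(n+1)*c3, t2⟩
      have hw := word3 c1 c2 c3 c4 c5 c6 f1 f2 f3 f4 (t1+(n)*c3) t2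
      have heq : ⟨c1, c2, c3, c4, c5, c6, f1, f2, f3, f4, t1+(n+1)*c3, t2⟩
          = (⟨c1, c2, c3, c4, c5, c6, f1, f2, f3, f4, ((t1+(n)*c3)) + c3, t2⟩ : Tuple) := by
        simp only [Tuple.mk.injEq] <;> (and_intros <;> first | rfl | trivial | ring)
      rw [heq]
      exact hw) k
  simpa using h

lemma translate (c1 c2 c3 c4 c5 c6 pa pb ra rb f1 f2 f3 f4 t1 t2 t1' t2' : ℤ)
    (hpa : pa*c1 + pb*(c2*c3) = 1) (hra : ra*c3 + rb*(c1*c2) = 1) :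
    PsiEquiv ⟨c1, c2, c3, c4, c5, c6, f1, f2, f3, f4, t1, t2⟩
      ⟨c1, c2, c3, c4, c5, c6, f1, f2, f3, f4, t1', t2'⟩ := by
  have h1 := witer1 c1 c2 c3 c4 c5 c6 f1 f2 f3 f4 t1 t2
    (-(rb*c2)*(t1'-t1) - pa*(t2'-t2))
  have h2 := witer2 c1 c2 c3 c4 c5 c6 f1 f2 f3 f4 t1 (t2-(-(rb*c2)*(t1'-t1) - pa*(t2'-t2))*c1)
    (-(rb*c1)*(t1'-t1) + pb*c3*(t2'-t2))
  have h3 := witer3 c1 c2 c3 c4 c5 c6 f1 f2 f3 f4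
    (t1-(-(rb*c1)*(t1'-t1) + pb*c3*(t2'-t2))*c2)
    (t2-(-(rb*c2)*(t1'-t1) - pa*(t2'-t2))*c1+(-(rb*c1)*(t1'-t1) + pb*c3*(t2'-t2))*c2)
    (ra*(t1'-t1) + pb*c2*(t2'-t2))
  have hfin : (⟨c1, c2, c3, c4, c5, c6, f1, f2, f3, f4,
      t1-(-(rb*c1)*(t1'-t1) + pb*c3*(t2'-t2))*c2+(ra*(t1'-t1) + pb*c2*(t2'-t2))*c3,
      t2-(-(rb*c2)*(t1'-t1) - pa*(t2'-t2))*c1+(-(rb*c1)*(t1'-t1) + pb*c3*(t2'-t2))*c2⟩ : Tuple)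
      = ⟨c1, c2, c3, c4, c5, c6, f1, f2, f3, f4, t1', t2'⟩ := by
    simp only [Tuple.mk.injEq]
    and_intros <;> first
      | rfl
      | trivial
      | linear_combination (t1'-t1)*hra
      | linear_combination (t2'-t2)*hpa
  rw [← hfin]
  exact psiequiv_trans h1 (psiequiv_trans h2 h3)


def Can (c1 c2 c3 c4 c5 c6 a b d e : ℤ) : Prop :=
  ∀ f1 f2 f3 f4 t1 t2 t1' t2' : ℤ,
    PsiEquiv ⟨c1, c2, c3, c4, c5, c6, f1, f2, f3, f4, t1, t2⟩
      ⟨c1, c2, c3, c4, c5, c6, f1+a, f2+b, f3+d, f4+e, t1', t2'⟩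

lemma can_congr {c1 c2 c3 c4 c5 c6 a b d e a' b' d' e' : ℤ}
    (h : Can c1 c2 c3 c4 c5 c6 a b d e)
    (ha : a = a') (hb : b = b') (hd : d = d') (he : e = e') :
    Can c1 c2 c3 c4 c5 c6 a' b' d' e' := by
  subst ha; subst hb; subst hd; subst he; exact h

lemma can_trans {c1 c2 c3 c4 c5 c6 a b d e a' b' d' e' : ℤ}
    (h : Can c1 c2 c3 c4 c5 c6 a b d e) (h' : Can c1 c2 c3 c4 c5 c6 a' b' d' e') :
    Can c1 c2 c3 c4 c5 c6 (a+a') (b+b') (d+d') (e+e') := by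
  intro f1 f2 f3 f4 t1 t2 t1' t2'
  have h1 := h f1 f2 f3 f4 t1 t2 0 0
  have h2 := h' (f1+a) (f2+b) (f3+d) (f4+e) 0 0 t1' t2'
  have heq : (⟨c1, c2, c3, c4, c5, c6, f1+a+a', f2+b+b', f3+d+d', f4+e+e', t1', t2'⟩ : Tuple)
      = ⟨c1, c2, c3, c4, c5, c6, f1+(a+a'), f2+(b+b'), f3+(d+d'), f4+(e+e'), t1', t2'⟩ := by
    simp only [Tuple.mk.injEq] <;> (and_intros <;> first | rfl | trivial | ring)
  rw [← heq]
  exact psiequiv_trans h1 h2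


lemma can_v1 (c1 c2 c3 c4 c5 c6 pa pb ra rb : ℤ)
    (hpa : pa*c1 + pb*(c2*c3) = 1) (hra : ra*c3 + rb*(c1*c2) = 1) (k : ℤ) :
    Can c1 c2 c3 c4 c5 c6 (0) (0) (k*c5) (-(k*c1)) := by
  intro f1 f2 f3 f4 t1 t2 t1' t2'
  have h1 := iter21 c1 c2 c3 c4 c5 c6 f1 f2 f3 f4 t1 t2 k
  have h2 := translate c1 c2 c3 c4 c5 c6 pa pb ra rb (f1) (f2) (f3+k*c5) (f4-k*c1) (t1+k*f1) (t2) t1' t2' hpa hra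
  have heq : (⟨c1, c2, c3, c4, c5, c6, (f1), (f2), (f3+k*c5), (f4-k*c1), t1', t2'⟩ : Tuple)
      = ⟨c1, c2, c3, c4, c5, c6, f1+(0), f2+(0), f3+(k*c5), f4+(-(k*c1)), t1', t2'⟩ := by
    simp only [Tuple.mk.injEq] <;> (and_intros <;> first | rfl | trivial | ring)
  rw [← heq]
  exact psiequiv_trans h1 h2

lemma can_v2 (c1 c2 c3 c4 c5 c6 pa pb ra rb : ℤ)
    (hpa : pa*c1 + pb*(c2*c3) = 1) (hra : ra*c3 + rb*(c1*c2) = 1) (k : ℤ) :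
    Can c1 c2 c3 c4 c5 c6 (0) (k*c6) (-(k*c5)) (0) := by
  intro f1 f2 f3 f4 t1 t2 t1' t2'
  have h1 := iter41 c1 c2 c3 c4 c5 c6 f1 f2 f3 f4 t1 t2 k
  have h2 := translate c1 c2 c3 c4 c5 c6 pa pb ra rb (f1) (f2+k*c6) (f3-k*c5) (f4) (t1) (t2-k*f1) t1' t2' hpa hra
  have heq : (⟨c1, c2, c3, c4, c5, c6, (f1), (f2+k*c6), (f3-k*c5), (f4), t1', t2'⟩ : Tuple)
      = ⟨c1, c2, c3, c4, c5, c6, f1+(0), f2+(k*c6), f3+(-(k*c5)), f4+(0), t1', t2'⟩ := by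
    simp only [Tuple.mk.injEq] <;> (and_intros <;> first | rfl | trivial | ring)
  rw [← heq]
  exact psiequiv_trans h1 h2

lemma can_v3 (c1 c2 c3 c4 c5 c6 pa pb ra rb : ℤ)
    (hpa : pa*c1 + pb*(c2*c3) = 1) (hra : ra*c3 + rb*(c1*c2) = 1) (k : ℤ) :
    Can c1 c2 c3 c4 c5 c6 (0) (0) (-(k*c4)) (k*c2) := by
  intro f1 f2 f3 f4 t1 t2 t1' t2'
  have h1 := iter12 c1 c2 c3 c4 c5 c6 f1 f2 f3 f4 t1 t2 k
  have h2 := translate c1 c2 c3 c4 c5 c6 pa pb ra rb (f1) (f2) (f3-k*c4) (f4+k*c2) (t1+k*f2) (t2) t1' t2' hpa hra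
  have heq : (⟨c1, c2, c3, c4, c5, c6, (f1), (f2), (f3-k*c4), (f4+k*c2), t1', t2'⟩ : Tuple)
      = ⟨c1, c2, c3, c4, c5, c6, f1+(0), f2+(0), f3+(-(k*c4)), f4+(k*c2), t1', t2'⟩ := by
    simp only [Tuple.mk.injEq] <;> (and_intros <;> first | rfl | trivial | ring)
  rw [← heq]
  exact psiequiv_trans h1 h2

lemma can_v4 (c1 c2 c3 c4 c5 c6 pa pb ra rb : ℤ)
    (hpa : pa*c1 + pb*(c2*c3) = 1) (hra : ra*c3 + rb*(c1*c2) = 1) (k : ℤ) :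
    Can c1 c2 c3 c4 c5 c6 (k*c6) (0) (0) (-(k*c2)) := by
  intro f1 f2 f3 f4 t1 t2 t1' t2'
  have h1 := iter32 c1 c2 c3 c4 c5 c6 f1 f2 f3 f4 t1 t2 k
  have h2 := translate c1 c2 c3 c4 c5 c6 pa pb ra rb (f1+k*c6) (f2) (f3) (f4-k*c2) (t1) (t2-k*f2) t1' t2' hpa hra
  have heq : (⟨c1, c2, c3, c4, c5, c6, (f1+k*c6), (f2), (f3), (f4-k*c2), t1', t2'⟩ : Tuple)
      = ⟨c1, c2, c3, c4, c5, c6, f1+(k*c6), f2+(0), f3+(0), f4+(-(k*c2)), t1', t2'⟩ := by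
    simp only [Tuple.mk.injEq] <;> (and_intros <;> first | rfl | trivial | ring)
  rw [← heq]
  exact psiequiv_trans h1 h2

lemma can_v5 (c1 c2 c3 c4 c5 c6 pa pb ra rb : ℤ)
    (hpa : pa*c1 + pb*(c2*c3) = 1) (hra : ra*c3 + rb*(c1*c2) = 1) (k : ℤ) :
    Can c1 c2 c3 c4 c5 c6 (k*c5) (-(k*c4)) (0) (0) := by
  intro f1 f2 f3 f4 t1 t2 t1' t2'
  have h1 := iter43 c1 c2 c3 c4 c5 c6 f1 f2 f3 f4 t1 t2 k
  have h2 := translate c1 c2 c3 c4 c5 c6 pa pb ra rb (f1+k*c5) (f2-k*c4) (f3) (f4) (t1+k*f3) (t2) t1' t2' hpa hra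
  have heq : (⟨c1, c2, c3, c4, c5, c6, (f1+k*c5), (f2-k*c4), (f3), (f4), t1', t2'⟩ : Tuple)
      = ⟨c1, c2, c3, c4, c5, c6, f1+(k*c5), f2+(-(k*c4)), f3+(0), f4+(0), t1', t2'⟩ := by
    simp only [Tuple.mk.injEq] <;> (and_intros <;> first | rfl | trivial | ring)
  rw [← heq]
  exact psiequiv_trans h1 h2

lemma can_v6 (c1 c2 c3 c4 c5 c6 pa pb ra rb : ℤ)
    (hpa : pa*c1 + pb*(c2*c3) = 1) (hra : ra*c3 + rb*(c1*c2) = 1) (k : ℤ) :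
    Can c1 c2 c3 c4 c5 c6 (-(k*c5)) (0) (0) (k*c3) := by
  intro f1 f2 f3 f4 t1 t2 t1' t2'
  have h1 := iter23 c1 c2 c3 c4 c5 c6 f1 f2 f3 f4 t1 t2 k
  have h2 := translate c1 c2 c3 c4 c5 c6 pa pb ra rb (f1-k*c5) (f2) (f3) (f4+k*c3) (t1) (t2-k*f3) t1' t2' hpa hra
  have heq : (⟨c1, c2, c3, c4, c5, c6, (f1-k*c5), (f2), (f3), (f4+k*c3), t1', t2'⟩ : Tuple)
      = ⟨c1, c2, c3, c4, c5, c6, f1+(-(k*c5)), f2+(0), f3+(0), f4+(k*c3), t1', t2'⟩ := by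
    simp only [Tuple.mk.injEq] <;> (and_intros <;> first | rfl | trivial | ring)
  rw [← heq]
  exact psiequiv_trans h1 h2

lemma can_v7 (c1 c2 c3 c4 c5 c6 pa pb ra rb : ℤ)
    (hpa : pa*c1 + pb*(c2*c3) = 1) (hra : ra*c3 + rb*(c1*c2) = 1) (k : ℤ) :
    Can c1 c2 c3 c4 c5 c6 (-(k*c1)) (k*c2) (0) (0) := by
  intro f1 f2 f3 f4 t1 t2 t1' t2'
  have h1 := iter34 c1 c2 c3 c4 c5 c6 f1 f2 f3 f4 t1 t2 k
  have h2 := translate c1 c2 c3 c4 c5 c6 pa pb ra rb (f1-k*c1) (f2+k*c2) (f3) (f4) (t1+k*f4) (t2) t1' t2' hpa hra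
  have heq : (⟨c1, c2, c3, c4, c5, c6, (f1-k*c1), (f2+k*c2), (f3), (f4), t1', t2'⟩ : Tuple)
      = ⟨c1, c2, c3, c4, c5, c6, f1+(-(k*c1)), f2+(k*c2), f3+(0), f4+(0), t1', t2'⟩ := by
    simp only [Tuple.mk.injEq] <;> (and_intros <;> first | rfl | trivial | ring)
  rw [← heq]
  exact psiequiv_trans h1 h2

lemma can_v8 (c1 c2 c3 c4 c5 c6 pa pb ra rb : ℤ)
    (hpa : pa*c1 + pb*(c2*c3) = 1) (hra : ra*c3 + rb*(c1*c2) = 1) (k : ℤ) :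
    Can c1 c2 c3 c4 c5 c6 (0) (-(k*c2)) (k*c3) (0) := by
  intro f1 f2 f3 f4 t1 t2 t1' t2'
  have h1 := iter14 c1 c2 c3 c4 c5 c6 f1 f2 f3 f4 t1 t2 k
  have h2 := translate c1 c2 c3 c4 c5 c6 pa pb ra rb (f1) (f2-k*c2) (f3+k*c3) (f4) (t1) (t2-k*f4) t1' t2' hpa hra
  have heq : (⟨c1, c2, c3, c4, c5, c6, (f1), (f2-k*c2), (f3+k*c3), (f4), t1', t2'⟩ : Tuple)
      = ⟨c1, c2, c3, c4, c5, c6, f1+(0), f2+(-(k*c2)), f3+(k*c3), f4+(0), t1', t2'⟩ := by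
    simp only [Tuple.mk.injEq] <;> (and_intros <;> first | rfl | trivial | ring)
  rw [← heq]
  exact psiequiv_trans h1 h2
lemma canA1 (c1 c2 c3 c4 c5 c6 pa pb ra rb : ℤ)
    (hpa : pa*c1 + pb*(c2*c3) = 1) (hra : ra*c3 + rb*(c1*c2) = 1) (z : ℤ) :
    Can c1 c2 c3 c4 c5 c6 (z*(c1*c4-c2*c5)) 0 0 0 :=
  can_congr (can_trans (can_v7 c1 c2 c3 c4 c5 c6 pa pb ra rb hpa hra (-(z*c4))) (can_v5 c1 c2 c3 c4 c5 c6 pa pb ra rb hpa hra (-(z*c2)))) (by ring) (by ring) (by ring) (by ring)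

lemma canB1 (c1 c2 c3 c4 c5 c6 pa pb ra rb : ℤ)
    (hpa : pa*c1 + pb*(c2*c3) = 1) (hra : ra*c3 + rb*(c1*c2) = 1) (z : ℤ) :
    Can c1 c2 c3 c4 c5 c6 (z*(c1*c4-c3*c6)) 0 0 0 :=
  can_congr (can_trans (can_trans (can_trans (can_v7 c1 c2 c3 c4 c5 c6 pa pb ra rb hpa hra (-(z*c4))) (can_v4 c1 c2 c3 c4 c5 c6 pa pb ra rb hpa hra (-(z*c3)))) (can_v8 c1 c2 c3 c4 c5 c6 pa pb ra rb hpa hra (-(z*c4)))) (can_v3 c1 c2 c3 c4 c5 c6 pa pb ra rb hpa hra (-(z*c3)))) (by ring) (by ring) (by ring) (by ring)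

lemma canA2 (c1 c2 c3 c4 c5 c6 pa pb ra rb : ℤ)
    (hpa : pa*c1 + pb*(c2*c3) = 1) (hra : ra*c3 + rb*(c1*c2) = 1) (z : ℤ) :
    Can c1 c2 c3 c4 c5 c6 0 (z*(c1*c4-c2*c5)) 0 0 :=
  can_congr (can_trans (can_v5 c1 c2 c3 c4 c5 c6 pa pb ra rb hpa hra (-(z*c1))) (can_v7 c1 c2 c3 c4 c5 c6 pa pb ra rb hpa hra (-(z*c5)))) (by ring) (by ring) (by ring) (by ring)

lemma canB2 (c1 c2 c3 c4 c5 c6 pa pb ra rb : ℤ)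
    (hpa : pa*c1 + pb*(c2*c3) = 1) (hra : ra*c3 + rb*(c1*c2) = 1) (z : ℤ) :
    Can c1 c2 c3 c4 c5 c6 0 (z*(c1*c4-c3*c6)) 0 0 :=
  can_congr (can_trans (can_trans (can_trans (can_v5 c1 c2 c3 c4 c5 c6 pa pb ra rb hpa hra (-(z*c1))) (can_v7 c1 c2 c3 c4 c5 c6 pa pb ra rb hpa hra (-(z*c5)))) (can_v2 c1 c2 c3 c4 c5 c6 pa pb ra rb hpa hra (-(z*c3)))) (can_v8 c1 c2 c3 c4 c5 c6 pa pb ra rb hpa hra (-(z*c5)))) (by ring) (by ring) (by ring) (by ring)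

lemma canA3 (c1 c2 c3 c4 c5 c6 pa pb ra rb : ℤ)
    (hpa : pa*c1 + pb*(c2*c3) = 1) (hra : ra*c3 + rb*(c1*c2) = 1) (z : ℤ) :
    Can c1 c2 c3 c4 c5 c6 0 0 (z*(c1*c4-c2*c5)) 0 :=
  can_congr (can_trans (can_v1 c1 c2 c3 c4 c5 c6 pa pb ra rb hpa hra (-(z*c2))) (can_v3 c1 c2 c3 c4 c5 c6 pa pb ra rb hpa hra (-(z*c1)))) (by ring) (by ring) (by ring) (by ring)

lemma canB3 (c1 c2 c3 c4 c5 c6 pa pb ra rb : ℤ)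
    (hpa : pa*c1 + pb*(c2*c3) = 1) (hra : ra*c3 + rb*(c1*c2) = 1) (z : ℤ) :
    Can c1 c2 c3 c4 c5 c6 0 0 (z*(c1*c4-c3*c6)) 0 :=
  can_congr (can_trans (can_trans (can_trans (can_v1 c1 c2 c3 c4 c5 c6 pa pb ra rb hpa hra (-(z*c2))) (can_v3 c1 c2 c3 c4 c5 c6 pa pb ra rb hpa hra (-(z*c1)))) (can_v2 c1 c2 c3 c4 c5 c6 pa pb ra rb hpa hra (-(z*c2)))) (can_v8 c1 c2 c3 c4 c5 c6 pa pb ra rb hpa hra (-(z*c6)))) (by ring) (by ring) (by ring) (by ring)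

lemma can_g1 (c1 c2 c3 c4 c5 c6 pa pb ra rb : ℤ)
    (hpa : pa*c1 + pb*(c2*c3) = 1) (hra : ra*c3 + rb*(c1*c2) = 1) (sa sb G : ℤ)
    (hG : G = (c1*c4-c2*c5)*sa + (c1*c4-c3*c6)*sb) (z : ℤ) :
    Can c1 c2 c3 c4 c5 c6 (z*G) 0 0 0 :=
  can_congr (can_trans (canA1 c1 c2 c3 c4 c5 c6 pa pb ra rb hpa hra (z*sa)) (canB1 c1 c2 c3 c4 c5 c6 pa pb ra rb hpa hra (z*sb)))
    (by linear_combination (-z)*hG) (by ring) (by ring) (by ring)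

lemma can_g2 (c1 c2 c3 c4 c5 c6 pa pb ra rb : ℤ)
    (hpa : pa*c1 + pb*(c2*c3) = 1) (hra : ra*c3 + rb*(c1*c2) = 1) (sa sb G : ℤ)
    (hG : G = (c1*c4-c2*c5)*sa + (c1*c4-c3*c6)*sb) (z : ℤ) :
    Can c1 c2 c3 c4 c5 c6 0 (z*G) 0 0 :=
  can_congr (can_trans (canA2 c1 c2 c3 c4 c5 c6 pa pb ra rb hpa hra (z*sa)) (canB2 c1 c2 c3 c4 c5 c6 pa pb ra rb hpa hra (z*sb)))
    (by ring) (by linear_combination (-z)*hG) (by ring) (by ring)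

lemma can_g3 (c1 c2 c3 c4 c5 c6 pa pb ra rb : ℤ)
    (hpa : pa*c1 + pb*(c2*c3) = 1) (hra : ra*c3 + rb*(c1*c2) = 1) (sa sb G : ℤ)
    (hG : G = (c1*c4-c2*c5)*sa + (c1*c4-c3*c6)*sb) (z : ℤ) :
    Can c1 c2 c3 c4 c5 c6 0 0 (z*G) 0 :=
  can_congr (can_trans (canA3 c1 c2 c3 c4 c5 c6 pa pb ra rb hpa hra (z*sa)) (canB3 c1 c2 c3 c4 c5 c6 pa pb ra rb hpa hra (z*sb)))
    (by ring) (by ring) (by linear_combination (-z)*hG) (by ring)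

lemma backward (c1 c2 c3 c4 c5 c6 f1 f2 f3 f4 t1 t2 f1' f2' f3' f4' t1' t2' : ℤ)
    (h12 : Int.gcd c1 c2 = 1) (h23 : Int.gcd c2 c3 = 1) (h13 : Int.gcd c1 c3 = 1)
    (hdvd : (Int.gcd (c1 * c4 - c2 * c5) (c1 * c4 - c3 * c6) : ℤ) ∣
        (c1 * c2 * f3 + c1 * c3 * f2 + c2 * c3 * f1 + c2 * c5 * f4) -
          (c1 * c2 * f3' + c1 * c3 * f2' + c2 * c3 * f1' + c2 * c5 * f4')) :
    PsiEquiv ⟨c1, c2, c3, c4, c5, c6, f1, f2, f3, f4, t1, t2⟩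
      ⟨c1, c2, c3, c4, c5, c6, f1', f2', f3', f4', t1', t2'⟩ := by
  have hc12 : IsCoprime (c1 : ℤ) c2 := Int.isCoprime_iff_gcd_eq_one.mpr h12
  have hc23 : IsCoprime (c2 : ℤ) c3 := Int.isCoprime_iff_gcd_eq_one.mpr h23
  have hc13 : IsCoprime (c1 : ℤ) c3 := Int.isCoprime_iff_gcd_eq_one.mpr h13
  obtain ⟨pa, pb, hpa⟩ := hc12.mul_right hc13
  obtain ⟨qa, qb, hqa⟩ := hc12.symm.mul_right hc23
  obtain ⟨ra, rb, hra⟩ := hc13.symm.mul_right hc23.symm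
  set G : ℤ := (Int.gcd (c1 * c4 - c2 * c5) (c1 * c4 - c3 * c6) : ℤ) with hGdef
  obtain ⟨k, hk⟩ := hdvd
  set m : ℤ := -k with hmdef
  have hW : c2*c3*(f1'-f1) + c1*c3*(f2'-f2) + c1*c2*(f3'-f3) + c2*c5*(f4'-f4) = m*G := by
    rw [hmdef]; linear_combination -hk
  have hG : G = (c1*c4-c2*c5) * Int.gcdA (c1*c4-c2*c5) (c1*c4-c3*c6)
      + (c1*c4-c3*c6) * Int.gcdB (c1*c4-c2*c5) (c1*c4-c3*c6) := by
    rw [hGdef]; exact Int.gcd_eq_gcd_ab _ _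
  have HC : Can c1 c2 c3 c4 c5 c6 (f1'-f1) (f2'-f2) (f3'-f3) (f4'-f4) := by
    refine can_congr
      (can_trans (can_trans (can_trans (can_trans (can_trans
        (can_v1 c1 c2 c3 c4 c5 c6 pa pb ra rb hpa hra (-pa*(f4'-f4)))
        (can_v6 c1 c2 c3 c4 c5 c6 pa pb ra rb hpa hra (c2*pb*(f4'-f4))))
        (can_v7 c1 c2 c3 c4 c5 c6 pa pb ra rb hpa hra (-pa*(f1'-f1) + c3*pb*(f2'-f2) + c2*qa*ra*(f3'-f3) + c2*pb*(f3'-f3) + c2*c5*pa*qa*ra*(f4'-f4) + c2*c3*qa*qa*ra*(f2'-f2) - c2*c3*c5*qa*qb*ra*(f4'-f4) - c2*c3*c3*qa*qb*ra*(f1'-f1) + c2*c2*c3*pa*qa*qa*ra*(f1'-f1) - c2*c2*c3*c3*pb*qa*qa*ra*(f2'-f2) - c2*c2*c2*c3*pb*qa*qa*ra*(f3'-f3) - c1*c2*c3*qa*qb*ra*(f3'-f3) + c1*c2*c3*c3*pa*qa*qb*ra*(f1'-f1) - c1*c2*c3*c3*c3*pb*qa*qb*ra*(f2'-f2) - c1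*c2*c2*c3*c3*pb*qa*qb*ra*(f3'-f3))))
        (can_v8 c1 c2 c3 c4 c5 c6 pa pb ra rb hpa hra (ra*(f3'-f3) - qa*(f2'-f2) + c5*qb*(f4'-f4) + c5*pa*ra*(f4'-f4) + c3*qb*(f1'-f1) + c3*qa*ra*(f2'-f2) - c3*c5*qb*ra*(f4'-f4) - c3*c3*qb*ra*(f1'-f1) - c2*pa*qa*(f1'-f1) + c2*c3*pb*qa*(f2'-f2) + c2*c3*pa*qa*ra*(f1'-f1) - c2*c3*c3*pb*qa*ra*(f2'-f2) + c2*c2*pb*qa*(f3'-f3) - c2*c2*c3*pb*qa*ra*(f3'-f3) + c1*qb*(f3'-f3) - c1*c3*qb*ra*(f3'-f3) - c1*c3*pa*qb*(f1'-f1) + c1*c3*c3*pb*qb*(f2'-f2) + c1*c3*c3*pa*qb*ra*(f1'-f1) - c1*c3*c3*c3*pb*qb*ra*(f2'-f2) + c1*c2*c3*pb*qb*(f3'-f3) - c1*c2*c3*c3*pb*qb*ra*(f3'-f3))))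
        (can_g1 c1 c2 c3 c4 c5 c6 pa pb ra rb hpa hra _ _ G hG (pb*m + c2*qa*qa*ra*m - c2*c3*pb*qa*ra*m)))
        (can_trans
          (can_g2 c1 c2 c3 c4 c5 c6 pa pb ra rb hpa hra _ _ G hG (qb*m + c2*c3*qa*qb*ra*m - c2*c3*c3*pb*qb*ra*m))
          (can_g3 c1 c2 c3 c4 c5 c6 pa pb ra rb hpa hra _ _ G hG (c2*qa*rb*m - c2*c3*pb*rb*m))))
      ?_ ?_ ?_ ?_
    · linear_combination (-(-(f1'-f1) + c2*c5*qa*ra*(f4'-f4) + c2*c2*c3*qa*qa*ra*(f1'-f1) + c1*c2*c3*c3*qa*qb*ra*(f1'-f1)))*hpa + (-(-qa*ra*m*G + c3*pb*ra*m*G + c2*c3*qa*ra*(f1'-f1) - c2*c3*c5*pb*ra*(f4'-f4) - c2*c3*c3*pb*ra*(f1'-f1) - c2*c2*c3*c3*pb*qa*ra*(f1'-f1) + c1*c5*qb*(f4'-f4) + c1*c3*qb*(f1'-f1) + c1*c3*qa*ra*(f2'-f2) - c1*c3*c5*qb*ra*(f4'-f4) - c1*c3*c3*qb*ra*(f1'-f1)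 - c1*c3*c3*pb*ra*(f2'-f2) - c1*c2*c3*pb*ra*(f3'-f3) - c1*c2*c3*c3*pb*qa*ra*(f2'-f2) - c1*c2*c2*c3*pb*qa*ra*(f3'-f3) + c1*c1*qb*(f3'-f3) - c1*c1*qb*rb*m*G - c1*c1*c3*qb*ra*(f3'-f3) + c1*c1*c1*c3*qb*rb*(f2'-f2)))*hqa + (-(pb*m*G - c2*c5*pb*(f4'-f4) - c2*c3*pb*(f1'-f1) + c1*qa*qb*m*G - c1*c5*qb*(f4'-f4) - c1*c3*qb*(f1'-f1) - c1*c3*pb*(f2'-f2) - c1*c3*pb*qb*m*G - c1*c2*pb*(f3'-f3) + c1*c2*c3*c5*pb*qb*(f4'-f4) + c1*c2*c3*c3*pb*qb*(f1'-f1) - c1*c1*qb*(f3'-f3) - c1*c1*c3*qa*qb*(f2'-f2) + c1*c1*c3*c5*qb*qb*(f4'-f4) + c1*c1*c3*c3*qb*qb*(f1'-f1) + c1*c1*c3*c3*pb*qb*(f2'-f2) + c1*c1*c2*c3*pb*qb*(f3'-f3) + c1*c1*c1*c3*qb*qb*(f3'-f3)))*hra + (-(qa*ra - c1*qa*qb +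 c1*c3*pb*qb + c1*c2*pb*rb + c1*c1*qb*rb - c1*c1*c2*c3*pb*qb*rb - c1*c1*c1*c3*qb*qb*rb))*hW
    · linear_combination (-(c2*c3*c5*qb*ra*(f4'-f4) + c2*c3*c3*qb*ra*(f1'-f1)))*hpa + (-(-(f2'-f2) - c3*qb*ra*m*G - c2*ra*(f3'-f3) - c2*pa*(f1'-f1) - c2*c5*pa*ra*(f4'-f4) - c2*c3*qa*ra*(f2'-f2) + c2*c3*pb*(f2'-f2) + c2*c3*c5*qb*ra*(f4'-f4) + c2*c3*c3*qb*ra*(f1'-f1) + c2*c2*pb*(f3'-f3) - c2*c2*c3*pa*qa*ra*(f1'-f1) + c2*c2*c3*c3*pb*qa*ra*(f2'-f2) + c2*c2*c2*c3*pb*qa*ra*(f3'-f3) + c1*c3*c3*qb*ra*(f2'-f2) + c1*c2*c3*qb*ra*(f3'-f3)))*hqa + (-(-qb*m*G + c2*c5*qb*(f4'-f4) + c2*c3*qb*(f1'-f1) + c2*c3*pb*qb*m*G - c2*c2*c3*c5*pb*qb*(f4'-f4) - c2*c2*c3*c3*pb*qb*(f1'-f1) + c1*c3*qb*(f2'-f2)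 + c1*c3*qb*qb*m*G + c1*c2*qb*(f3'-f3) - c1*c2*c3*c5*qb*qb*(f4'-f4) - c1*c2*c3*c3*qb*qb*(f1'-f1) - c1*c2*c3*c3*pb*qb*(f2'-f2) - c1*c2*c2*c3*pb*qb*(f3'-f3) - c1*c1*c3*c3*qb*qb*(f2'-f2) - c1*c1*c2*c3*qb*qb*(f3'-f3)))*hra + (-(2*qb - c2*c3*pb*qb - c1*c3*qb*qb - c1*c2*qb*rb + c1*c2*c2*c3*pb*qb*rb + c1*c1*c2*c3*qb*qb*rb))*hW
    · linear_combination (-(c2*c5*rb*(f4'-f4) + c2*c3*rb*(f1'-f1)))*hpa + (-(-rb*m*G + c3*pa*(f1'-f1) - c3*c3*pb*(f2'-f2) - c3*c3*pa*ra*(f1'-f1) + c3*c3*c3*pb*ra*(f2'-f2) - c2*c3*pb*(f3'-f3) + c2*c3*c3*pb*ra*(f3'-f3) + c1*c3*rb*(f2'-f2)))*hqa + (-(-(f3'-f3) - c5*pa*(f4'-f4) - c3*qa*(f2'-f2) - c3*pa*(f1'-f1) + c3*c5*qb*(f4'-f4) + c3*c3*qb*(f1'-f1) + c3*c3*pb*(f2'-f2)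 + c2*c3*pb*(f3'-f3) + c1*c3*qb*(f3'-f3)))*hra + (-(rb - c2*c3*pb*rb - c1*c3*qb*rb))*hW
    · linear_combination (-(-(f4'-f4)))*hpa
  have h := HC f1 f2 f3 f4 t1 t2 t1' t2'
  have heq : (⟨c1, c2, c3, c4, c5, c6, f1+(f1'-f1), f2+(f2'-f2), f3+(f3'-f3), f4+(f4'-f4), t1', t2'⟩ : Tuple)
      = ⟨c1, c2, c3, c4, c5, c6, f1', f2', f3', f4', t1', t2'⟩ := by
    simp only [Tuple.mk.injEq] <;> (and_intros <;> first | rfl | trivial | ring)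
  rw [← heq]
  exact h


def invI (z : Tuple) : ℤ := z.c1*z.c2*z.f3 + z.c1*z.c3*z.f2 + z.c2*z.c3*z.f1 + z.c2*z.c5*z.f4
def gcdC (z : Tuple) : ℤ := (Int.gcd (z.c1*z.c4 - z.c2*z.c5) (z.c1*z.c4 - z.c3*z.c6) : ℤ)

lemma forward {x y : Tuple} (h : PsiEquiv x y) :
    (x.c1 = y.c1 ∧ x.c2 = y.c2 ∧ x.c3 = y.c3 ∧ x.c4 = y.c4 ∧ x.c5 = y.c5 ∧ x.c6 = y.c6)
      ∧ gcdC x ∣ invI x - invI y := by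
  induction h with
  | rel a b hab =>
      obtain ⟨g, hg, rfl⟩ := hab
      simp only [psiMoves, List.mem_cons, List.not_mem_nil, or_false] at hg
      rcases hg with rfl|rfl|rfl|rfl|rfl|rfl|rfl|rfl
      · refine ⟨⟨rfl, rfl, rfl, rfl, rfl, rfl⟩, ?_⟩
        have hd : invI a - invI (psi21 a) = 0 := by
          simp only [invI, psi21, Equiv.coe_fn_mk]; ring
        rw [hd]; exact dvd_zero _
      · refine ⟨⟨rfl, rfl, rfl, rfl, rfl, rfl⟩, ?_⟩
        have hd : invI a - invI (psi41 a) =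
            a.c1 * ((a.c1*a.c4 - a.c3*a.c6) - (a.c1*a.c4 - a.c2*a.c5)) := by
          simp only [invI, psi41, Equiv.coe_fn_mk]; ring
        rw [hd]
        exact ((dvd_sub (Int.gcd_dvd_right _ _) (Int.gcd_dvd_left _ _))).mul_left _
      · refine ⟨⟨rfl, rfl, rfl, rfl, rfl, rfl⟩, ?_⟩
        have hd : invI a - invI (psi12 a) = a.c2 * (a.c1*a.c4 - a.c2*a.c5) := by
          simp only [invI, psi12, Equiv.coe_fn_mk]; ring
        rw [hd]
        exact (Int.gcd_dvd_left _ _).mul_left _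
      · refine ⟨⟨rfl, rfl, rfl, rfl, rfl, rfl⟩, ?_⟩
        have hd : invI a - invI (psi32 a) =
            a.c2 * ((a.c1*a.c4 - a.c3*a.c6) - (a.c1*a.c4 - a.c2*a.c5)) := by
          simp only [invI, psi32, Equiv.coe_fn_mk]; ring
        rw [hd]
        exact ((dvd_sub (Int.gcd_dvd_right _ _) (Int.gcd_dvd_left _ _))).mul_left _
      · refine ⟨⟨rfl, rfl, rfl, rfl, rfl, rfl⟩, ?_⟩
        have hd : invI a - invI (psi43 a) = a.c3 * (a.c1*a.c4 - a.c2*a.c5) := by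
          simp only [invI, psi43, Equiv.coe_fn_mk]; ring
        rw [hd]
        exact (Int.gcd_dvd_left _ _).mul_left _
      · refine ⟨⟨rfl, rfl, rfl, rfl, rfl, rfl⟩, ?_⟩
        have hd : invI a - invI (psi23 a) = 0 := by
          simp only [invI, psi23, Equiv.coe_fn_mk]; ring
        rw [hd]; exact dvd_zero _
      · refine ⟨⟨rfl, rfl, rfl, rfl, rfl, rfl⟩, ?_⟩
        have hd : invI a - invI (psi34 a) = 0 := by
          simp only [invI, psi34, Equiv.coe_fn_mk]; ring
        rw [hd]; exact dvd_zero _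
      · refine ⟨⟨rfl, rfl, rfl, rfl, rfl, rfl⟩, ?_⟩
        have hd : invI a - invI (psi14 a) = 0 := by
          simp only [invI, psi14, Equiv.coe_fn_mk]; ring
        rw [hd]; exact dvd_zero _
  | refl a => exact ⟨⟨rfl, rfl, rfl, rfl, rfl, rfl⟩, by simp⟩
  | symm a b hab ih =>
      obtain ⟨⟨e1, e2, e3, e4, e5, e6⟩, hd⟩ := ih
      refine ⟨⟨e1.symm, e2.symm, e3.symm, e4.symm, e5.symm, e6.symm⟩, ?_⟩
      have hgc : gcdC b = gcdC a := by
        simp only [gcdC, e1, e2, e3, e4, e5, e6]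
      rw [hgc, show invI b - invI a = -(invI a - invI b) by ring]
      exact dvd_neg.mpr hd
  | trans a b c hab hbc ih1 ih2 =>
      obtain ⟨⟨e1, e2, e3, e4, e5, e6⟩, hd1⟩ := ih1
      obtain ⟨⟨g1, g2, g3, g4, g5, g6⟩, hd2⟩ := ih2
      refine ⟨⟨e1.trans g1, e2.trans g2, e3.trans g3, e4.trans g4, e5.trans g5, e6.trans g6⟩, ?_⟩
      have hgc : gcdC b = gcdC a := by
        simp only [gcdC, e1, e2, e3, e4, e5, e6]
      rw [show invI a - invI c = (invI a - invI b) + (invI b - invI c) by ring]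
      exact dvd_add hd1 (hgc ▸ hd2)

end PsiAux


/-- Classification when c₁, c₂, c₃ are pairwise relatively prime: two tuples with the
same c-coordinates are ψ-equivalent iff
c₁c₂f₃+c₁c₃f₂+c₂c₃f₁+c₂c₅f₄ ≡ c₁c₂f₃′+c₁c₃f₂′+c₂c₃f₁′+c₂c₅f₄′
(mod gcd(c₁c₄−c₂c₅, c₁c₄−c₃c₆)), the congruence modulo 0 meaning equality. -/
theorem classification_coprime (c1 c2 c3 c4 c5 c6 f1 f2 f3 f4 t1 t2
      f1' f2' f3' f4' t1' t2' : ℤ)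
    (h12 : Int.gcd c1 c2 = 1) (h23 : Int.gcd c2 c3 = 1) (h13 : Int.gcd c1 c3 = 1) :
    PsiEquiv ⟨c1, c2, c3, c4, c5, c6, f1, f2, f3, f4, t1, t2⟩
        ⟨c1, c2, c3, c4, c5, c6, f1', f2', f3', f4', t1', t2'⟩ ↔
      (Int.gcd (c1 * c4 - c2 * c5) (c1 * c4 - c3 * c6) : ℤ) ∣
        (c1 * c2 * f3 + c1 * c3 * f2 + c2 * c3 * f1 + c2 * c5 * f4) -
          (c1 * c2 * f3' + c1 * c3 * f2' + c2 * c3 * f1' + c2 * c5 * f4') := by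
  constructor
  · intro h
    exact (PsiAux.forward h).2
  · intro hdvd
    exact PsiAux.backward c1 c2 c3 c4 c5 c6 f1 f2 f3 f4 t1 t2 f1' f2' f3' f4' t1' t2'
      h12 h23 h13 hdvd
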